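/- If ζ = q_0 q_1 ⋯ q_{m−1} is not a root of unity (that is, ζ^n ≠ 1 for every integer n ≥ 1), then the graded centre of the Ext algebra of Λ_q is trivial: Z_gr(E(Λ_q)) = K·1, the image of the structure map K → E(Λ_q). -/

import Mathlib

open scoped BigOperators

noncomputable section

/-- Generators of the path algebra: trivial paths `e i`, arrows `a i : i → i+1`
and `abar i : i+1 → i`. -/
inductive Gen (m : ℕ) : Type
  | e : ZMod m → Gen m
  | a : ZMod m → Gen m
  | abar : ZMod m → Gen m

/-- The free associative algebra on the generators. -/
abbrev FA (K : Type) [Field K] (m : ℕ) : Type := FreeAlgebra K (Gen m)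

def Ee (K : Type) [Field K] (m : ℕ) (i : ZMod m) : FA K m := FreeAlgebra.ι K (Gen.e i)
def Aa (K : Type) [Field K] (m : ℕ) (i : ZMod m) : FA K m := FreeAlgebra.ι K (Gen.a i)
def Bb (K : Type) [Field K] (m : ℕ) (i : ZMod m) : FA K m := FreeAlgebra.ι K (Gen.abar i)

/-- The defining relations of the path algebra KQ. -/
inductive PathRel (K : Type) [Field K] (m : ℕ) [NeZero m] : FA K m → FA K m → Prop
  | orth : ∀ i j : ZMod m, i ≠ j → PathRel K m (Ee K m i * Ee K m j) 0
  | idem : ∀ i : ZMod m, PathRel K m (Ee K m i * Ee K m i) (Ee K m i)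
  | total : PathRel K m (∑ i : ZMod m, Ee K m i) 1
  | asrc : ∀ i : ZMod m, PathRel K m (Ee K m i * Aa K m i) (Aa K m i)
  | atgt : ∀ i : ZMod m, PathRel K m (Aa K m i * Ee K m (i + 1)) (Aa K m i)
  | bsrc : ∀ i : ZMod m, PathRel K m (Ee K m (i + 1) * Bb K m i) (Bb K m i)
  | btgt : ∀ i : ZMod m, PathRel K m (Bb K m i * Ee K m i) (Bb K m i)

/-- The path algebra KQ. -/
abbrev PathAlg (K : Type) [Field K] (m : ℕ) [NeZero m] : Type := RingQuot (PathRel K m)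

def pe (K : Type) [Field K] (m : ℕ) [NeZero m] (i : ZMod m) : PathAlg K m :=
  RingQuot.mkAlgHom K (PathRel K m) (Ee K m i)
def pa (K : Type) [Field K] (m : ℕ) [NeZero m] (i : ZMod m) : PathAlg K m :=
  RingQuot.mkAlgHom K (PathRel K m) (Aa K m i)
def pb (K : Type) [Field K] (m : ℕ) [NeZero m] (i : ZMod m) : PathAlg K m :=
  RingQuot.mkAlgHom K (PathRel K m) (Bb K m i)

/-- The relations defining the Koszul dual (Ext algebra) of `Λ_q`:
`q_i⁻¹ a_i ā_i + ā_{i-1} a_{i-1} = 0`. -/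
inductive ExtRel (K : Type) [Field K] (m : ℕ) [NeZero m] (q : ZMod m → K) :
    PathAlg K m → PathAlg K m → Prop
  | rel : ∀ i : ZMod m,
      ExtRel K m q ((q i)⁻¹ • (pa K m i * pb K m i) + pb K m (i - 1) * pa K m (i - 1)) 0

/-- The Ext algebra `E(Λ_q)`. -/
abbrev ExtAlg (K : Type) [Field K] (m : ℕ) [NeZero m] (q : ZMod m → K) : Type :=
  RingQuot (ExtRel K m q)

def xe (K : Type) [Field K] (m : ℕ) [NeZero m] (q : ZMod m → K) (i : ZMod m) :
    ExtAlg K m q := RingQuot.mkAlgHom K (ExtRel K m q) (pe K m i)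
def xa (K : Type) [Field K] (m : ℕ) [NeZero m] (q : ZMod m → K) (i : ZMod m) :
    ExtAlg K m q := RingQuot.mkAlgHom K (ExtRel K m q) (pa K m i)
def xb (K : Type) [Field K] (m : ℕ) [NeZero m] (q : ZMod m → K) (i : ZMod m) :
    ExtAlg K m q := RingQuot.mkAlgHom K (ExtRel K m q) (pb K m i)

/-- `γ_i^n`, the image of the path `a_i a_{i+1} ⋯ a_{i+n-1}` in `E(Λ_q)`. -/
def gam (K : Type) [Field K] (m : ℕ) [NeZero m] (q : ZMod m → K) (i : ZMod m) :
    ℕ → ExtAlg K m q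
  | 0 => xe K m q i
  | n + 1 => xa K m q i * gam K m q (i + 1) n

/-- `δ_i^n`, the image of the path `ā_{i+n-1} ⋯ ā_{i+1} ā_i` in `E(Λ_q)`. -/
def del (K : Type) [Field K] (m : ℕ) [NeZero m] (q : ZMod m → K) (i : ZMod m) :
    ℕ → ExtAlg K m q
  | 0 => xe K m q i
  | n + 1 => xb K m q (i + (n : ZMod m)) * del K m q i n

/-- Homogeneity of path-length degree `n` in `E(Λ_q)`: membership in the span of
the (images of) paths of length `n`, i.e. of the monomials `γ_i^s δ_j^t` with `s + t = n`. -/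
def Homog (K : Type) [Field K] (m : ℕ) [NeZero m] (q : ZMod m → K) (n : ℕ)
    (z : ExtAlg K m q) : Prop :=
  z ∈ Submodule.span K
    {x : ExtAlg K m q | ∃ (i j : ZMod m) (s t : ℕ), s + t = n ∧ x = gam K m q i s * del K m q j t}

/-- The graded centre of `E(Λ_q)`: the subalgebra generated by all homogeneous elements `z`
of degree `n` such that `z g = (-1)^{n n'} g z` for all homogeneous `g` of degree `n'`. -/
def ZGr (K : Type) [Field K] (m : ℕ) [NeZero m] (q : ZMod m → K) :
    Subalgebra K (ExtAlg K m q) :=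
  Algebra.adjoin K
    {z : ExtAlg K m q | ∃ n : ℕ, Homog K m q n z ∧
      ∀ (n' : ℕ) (g : ExtAlg K m q), Homog K m q n' g →
        z * g = ((-1 : K) ^ (n * n')) • (g * z)}

/-- The product `q_k q_{k+1} ⋯ q_{k+len-1}` (subscripts modulo `m`). -/
def qblock (K : Type) [Field K] (m : ℕ) [NeZero m] (q : ZMod m → K) (k len : ℕ) : K :=
  ∏ j ∈ Finset.range len, q ((k + j : ℕ) : ZMod m)

/-- The coefficient `∏_{k=1}^{i} (q_k ⋯ q_{k+len-1})⁻¹`. -/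
def wcoef (K : Type) [Field K] (m : ℕ) [NeZero m] (q : ZMod m → K) (i len : ℕ) : K :=
  ∏ k ∈ Finset.Icc 1 i, (qblock K m q k len)⁻¹

set_option linter.unusedSectionVars false

section
namespace TrivAux

abbrev Idx (m : ℕ) := ZMod m × ℕ × ℕ
abbrev MM (K : Type) [Field K] (m : ℕ) := Idx m →₀ K

variable (K : Type) [Field K] (m : ℕ) [NeZero m] (q : ZMod m → K)

/-- coefficient `(-1)^s (q_{k+1} ⋯ q_{k+s})⁻¹` -/
def cc (k : ZMod m) (s : ℕ) : K :=
  (-1) ^ s * (∏ l ∈ Finset.range s, q (k + 1 + (l : ZMod m)))⁻¹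

lemma cc_zero (k : ZMod m) : cc K m q k 0 = 1 := by simp [cc]

lemma cc_succ_left (k : ZMod m) (s : ℕ) :
    cc K m q k (s + 1) = -(q (k + 1))⁻¹ * cc K m q (k + 1) s := by
  unfold cc
  rw [Finset.prod_range_succ']
  push_cast
  rw [mul_inv]
  ring_nf

lemma cc_succ_right (k : ZMod m) (s : ℕ) :
    cc K m q k (s + 1) = -(q (k + 1 + (s : ZMod m)))⁻¹ * cc K m q k s := by
  unfold cc
  rw [Finset.prod_range_succ, mul_inv]
  ring

lemma cc_ne_zero (hq : ∀ i, q i ≠ 0) (k : ZMod m) (s : ℕ) : cc K m q k s ≠ 0 := by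
  unfold cc
  apply mul_ne_zero
  · exact pow_ne_zero _ (by norm_num)
  · exact inv_ne_zero (Finset.prod_ne_zero_iff.2 fun l _ => hq _)


open Finsupp in
def opE (k : ZMod m) : MM K m →ₗ[K] MM K m :=
  Finsupp.lsum K fun b => if b.1 = k then Finsupp.lsingle b else 0

open Finsupp in
def opA (k : ZMod m) : MM K m →ₗ[K] MM K m :=
  Finsupp.lsum K fun b => if b.1 = k + 1 then Finsupp.lsingle (k, b.2.1 + 1, b.2.2) else 0

open Finsupp in
def opB (k : ZMod m) : MM K m →ₗ[K] MM K m :=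
  Finsupp.lsum K fun b =>
    if b.1 = k then cc K m q k b.2.1 • Finsupp.lsingle (k + 1, b.2.1, b.2.2 + 1) else 0

open Finsupp in
def Ta : MM K m →ₗ[K] MM K m :=
  Finsupp.lsum K fun b =>
    cc K m q (b.1 + (b.2.1 : ZMod m) - (b.2.2 : ZMod m)) b.2.2 •
      Finsupp.lsingle (b.1, b.2.1 + 1, b.2.2)

open Finsupp in
def Tb : MM K m →ₗ[K] MM K m :=
  Finsupp.lsum K fun b => Finsupp.lsingle (b.1, b.2.1, b.2.2 + 1)

@[simp] lemma opE_single (k i : ZMod m) (s t : ℕ) (c : K) :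
    opE K m k (Finsupp.single (i, s, t) c) =
      if i = k then Finsupp.single (i, s, t) c else 0 := by
  rw [opE, Finsupp.lsum_single]
  split_ifs <;> simp

@[simp] lemma opA_single (k i : ZMod m) (s t : ℕ) (c : K) :
    opA K m k (Finsupp.single (i, s, t) c) =
      if i = k + 1 then Finsupp.single (k, s + 1, t) c else 0 := by
  rw [opA, Finsupp.lsum_single]
  split_ifs <;> simp

@[simp] lemma opB_single (k i : ZMod m) (s t : ℕ) (c : K) :
    opB K m q k (Finsupp.single (i, s, t) c) =
      if i = k then Finsupp.single (k + 1, s, t + 1) (cc K m q k s * c) else 0 := by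
  rw [opB, Finsupp.lsum_single]
  split_ifs <;> simp [Finsupp.smul_single]

@[simp] lemma Ta_single (i : ZMod m) (s t : ℕ) (c : K) :
    Ta K m q (Finsupp.single (i, s, t) c) =
      Finsupp.single (i, s + 1, t) (cc K m q (i + (s : ZMod m) - (t : ZMod m)) t * c) := by
  rw [Ta, Finsupp.lsum_single]
  simp [Finsupp.smul_single]

@[simp] lemma Tb_single (i : ZMod m) (s t : ℕ) (c : K) :
    Tb K m (Finsupp.single (i, s, t) c) = Finsupp.single (i, s, t + 1) c := by
  rw [Tb, Finsupp.lsum_single]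
  rfl

-- pointwise evaluation lemmas
lemma opE_apply (k : ZMod m) (x : MM K m) (i : ZMod m) (s t : ℕ) :
    opE K m k x (i, s, t) = if i = k then x (i, s, t) else 0 := by
  induction x using Finsupp.induction_linear with
  | zero => simp
  | add f g hf hg => simp [hf, hg]; split_ifs <;> simp
  | single b c =>
    obtain ⟨i', s', t'⟩ := b
    rw [opE_single]
    split_ifs with h1 h2 <;>
      simp_all [Finsupp.single_apply, Prod.ext_iff] <;> aesop

lemma opA_apply (k : ZMod m) (x : MM K m) (s t : ℕ) :
    opA K m k x (k, s + 1, t) = x (k + 1, s, t) := by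
  induction x using Finsupp.induction_linear with
  | zero => simp
  | add f g hf hg => simp [hf, hg]
  | single b c =>
    obtain ⟨i', s', t'⟩ := b
    rw [opA_single]
    split_ifs with h1 <;> simp_all [Finsupp.single_apply, Prod.ext_iff] <;> aesop

lemma opB_apply (k : ZMod m) (x : MM K m) (s t : ℕ) :
    opB K m q k x (k + 1, s, t + 1) = cc K m q k s * x (k, s, t) := by
  induction x using Finsupp.induction_linear with
  | zero => simp
  | add f g hf hg => simp [hf, hg]; ring
  | single b c =>
    obtain ⟨i', s', t'⟩ := b
    rw [opB_single]
    split_ifs with h1 <;> simp_all [Finsupp.single_apply, Prod.ext_iff] <;> aesop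

lemma Ta_apply (x : MM K m) (k : ZMod m) (s t : ℕ) :
    Ta K m q x (k, s + 1, t) =
      cc K m q (k + (s : ZMod m) - (t : ZMod m)) t * x (k, s, t) := by
  induction x using Finsupp.induction_linear with
  | zero => simp
  | add f g hf hg => simp [hf, hg]; ring
  | single b c =>
    obtain ⟨i', s', t'⟩ := b
    rw [Ta_single]
    simp_all [Finsupp.single_apply, Prod.ext_iff]
    try aesop

lemma Tb_apply (x : MM K m) (i : ZMod m) (s t : ℕ) :
    Tb K m x (i, s, t + 1) = x (i, s, t) := by
  induction x using Finsupp.induction_linear with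
  | zero => simp
  | add f g hf hg => simp [hf, hg]
  | single b c =>
    obtain ⟨i', s', t'⟩ := b
    rw [Tb_single]
    simp_all [Finsupp.single_apply, Prod.ext_iff]
    try aesop


-- operator relations
lemma opE_mul_opE_ne {i j : ZMod m} (h : i ≠ j) :
    (opE K m i : Module.End K (MM K m)) * opE K m j = 0 := by
  refine Finsupp.lhom_ext fun b c => ?_
  obtain ⟨i', s', t'⟩ := b
  simp only [Module.End.mul_apply, LinearMap.zero_apply, opE_single]
  by_cases h1 : i' = j
  · subst h1
    rw [if_pos rfl, opE_single, if_neg (fun hh => h hh.symm)]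
  · rw [if_neg h1, map_zero]

lemma opE_mul_opE (i : ZMod m) :
    (opE K m i : Module.End K (MM K m)) * opE K m i = opE K m i := by
  refine Finsupp.lhom_ext fun b c => ?_
  obtain ⟨i', s', t'⟩ := b
  simp only [Module.End.mul_apply, opE_single]
  by_cases h1 : i' = i
  · rw [if_pos h1, opE_single, if_pos h1]
  · rw [if_neg h1, map_zero]

lemma sum_opE : (∑ i : ZMod m, (opE K m i : Module.End K (MM K m))) = 1 := by
  refine Finsupp.lhom_ext fun b c => ?_
  obtain ⟨i', s', t'⟩ := b
  simp only [LinearMap.sum_apply, Module.End.one_apply, opE_single]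
  rw [Finset.sum_ite_eq]
  simp

lemma opE_mul_opA (i : ZMod m) :
    (opE K m i : Module.End K (MM K m)) * opA K m i = opA K m i := by
  refine Finsupp.lhom_ext fun b c => ?_
  obtain ⟨i', s', t'⟩ := b
  simp only [Module.End.mul_apply, opA_single]
  by_cases h1 : i' = i + 1
  · rw [if_pos h1, opE_single, if_pos rfl]
  · rw [if_neg h1, map_zero]

lemma opA_mul_opE (i : ZMod m) :
    (opA K m i : Module.End K (MM K m)) * opE K m (i + 1) = opA K m i := by
  refine Finsupp.lhom_ext fun b c => ?_
  obtain ⟨i', s', t'⟩ := b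
  simp only [Module.End.mul_apply, opE_single, opA_single]
  by_cases h1 : i' = i + 1
  · rw [if_pos h1, opA_single, if_pos h1]
  · rw [if_neg h1, map_zero, if_neg h1]

lemma opE_mul_opB (i : ZMod m) :
    (opE K m (i + 1) : Module.End K (MM K m)) * opB K m q i = opB K m q i := by
  refine Finsupp.lhom_ext fun b c => ?_
  obtain ⟨i', s', t'⟩ := b
  simp only [Module.End.mul_apply, opB_single]
  by_cases h1 : i' = i
  · rw [if_pos h1, opE_single, if_pos rfl]
  · rw [if_neg h1, map_zero]

lemma opB_mul_opE (i : ZMod m) :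
    (opB K m q i : Module.End K (MM K m)) * opE K m i = opB K m q i := by
  refine Finsupp.lhom_ext fun b c => ?_
  obtain ⟨i', s', t'⟩ := b
  simp only [Module.End.mul_apply, opE_single, opB_single]
  by_cases h1 : i' = i
  · rw [if_pos h1, opB_single, if_pos h1]
  · rw [if_neg h1, map_zero, if_neg h1]

lemma ext_rel_op (i : ZMod m) :
    (q i)⁻¹ • ((opA K m i : Module.End K (MM K m)) * opB K m q i) +
      opB K m q (i - 1) * opA K m (i - 1) = 0 := by
  refine Finsupp.lhom_ext fun b c => ?_
  obtain ⟨i', s', t'⟩ := b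
  have him : i - 1 + 1 = i := by ring
  simp only [LinearMap.add_apply, LinearMap.smul_apply, Module.End.mul_apply,
    LinearMap.zero_apply]
  by_cases h1 : i' = i
  · subst h1
    rw [opB_single, if_pos rfl, opA_single, if_pos rfl, opA_single, if_pos him.symm,
      opB_single, if_pos rfl, him, Finsupp.smul_single]
    rw [← Finsupp.single_add]
    convert Finsupp.single_zero _
    · rfl
    have hc : cc K m q (i' - 1) (s' + 1) = -(q i')⁻¹ * cc K m q i' s' := by
      rw [cc_succ_left]
      rw [him]
    rw [hc, smul_eq_mul]
    ring
  · rw [opB_single, if_neg h1, map_zero, smul_zero, opA_single,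
      if_neg (fun hh : i' = i - 1 + 1 => h1 (by rwa [him] at hh)), map_zero, add_zero]



-- the representation
def genOp : Gen m → Module.End K (MM K m)
  | .e i => opE K m i
  | .a i => opA K m i
  | .abar i => opB K m q i

def phi0 : FA K m →ₐ[K] Module.End K (MM K m) := FreeAlgebra.lift K (genOp K m q)

@[simp] lemma phi0_e (i : ZMod m) : phi0 K m q (Ee K m i) = opE K m i := by
  simp [phi0, Ee, genOp]
@[simp] lemma phi0_a (i : ZMod m) : phi0 K m q (Aa K m i) = opA K m i := by
  simp [phi0, Aa, genOp]
@[simp] lemma phi0_b (i : ZMod m) : phi0 K m q (Bb K m i) = opB K m q i := by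
  simp [phi0, Bb, genOp]

lemma phi0_rel : ∀ ⦃x y⦄, PathRel K m x y → phi0 K m q x = phi0 K m q y := by
  intro x y h
  induction h with
  | orth i j hij => rw [map_mul, map_zero, phi0_e, phi0_e, opE_mul_opE_ne K m hij]
  | idem i => rw [map_mul, phi0_e, opE_mul_opE]
  | total => rw [map_sum, map_one]; simp only [phi0_e]; exact sum_opE K m
  | asrc i => rw [map_mul, phi0_e, phi0_a, opE_mul_opA]
  | atgt i => rw [map_mul, phi0_e, phi0_a, opA_mul_opE]
  | bsrc i => rw [map_mul, phi0_e, phi0_b, opE_mul_opB]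
  | btgt i => rw [map_mul, phi0_e, phi0_b, opB_mul_opE]

def phi1 : PathAlg K m →ₐ[K] Module.End K (MM K m) :=
  RingQuot.liftAlgHom K ⟨phi0 K m q, phi0_rel K m q⟩

@[simp] lemma phi1_pe (i : ZMod m) : phi1 K m q (pe K m i) = opE K m i := by
  rw [phi1, pe, RingQuot.liftAlgHom_mkAlgHom_apply, phi0_e]
@[simp] lemma phi1_pa (i : ZMod m) : phi1 K m q (pa K m i) = opA K m i := by
  rw [phi1, pa, RingQuot.liftAlgHom_mkAlgHom_apply, phi0_a]
@[simp] lemma phi1_pb (i : ZMod m) : phi1 K m q (pb K m i) = opB K m q i := by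
  rw [phi1, pb, RingQuot.liftAlgHom_mkAlgHom_apply, phi0_b]

lemma phi1_rel : ∀ ⦃x y⦄, ExtRel K m q x y → phi1 K m q x = phi1 K m q y := by
  intro x y h
  induction h with
  | rel i =>
      rw [map_add, map_smul, map_mul, map_mul, map_zero, phi1_pa, phi1_pb, phi1_pa, phi1_pb]
      exact ext_rel_op K m q i

def Phi : ExtAlg K m q →ₐ[K] Module.End K (MM K m) :=
  RingQuot.liftAlgHom K ⟨phi1 K m q, phi1_rel K m q⟩

@[simp] lemma Phi_xe (i : ZMod m) : Phi K m q (xe K m q i) = opE K m i := by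
  rw [Phi, xe, RingQuot.liftAlgHom_mkAlgHom_apply, phi1_pe]
@[simp] lemma Phi_xa (i : ZMod m) : Phi K m q (xa K m q i) = opA K m i := by
  rw [Phi, xa, RingQuot.liftAlgHom_mkAlgHom_apply, phi1_pa]
@[simp] lemma Phi_xb (i : ZMod m) : Phi K m q (xb K m q i) = opB K m q i := by
  rw [Phi, xb, RingQuot.liftAlgHom_mkAlgHom_apply, phi1_pb]

-- basic relations in ExtAlg
lemma xqd {a b : FA K m} (h : PathRel K m a b) :
    RingQuot.mkAlgHom K (ExtRel K m q) (RingQuot.mkAlgHom K (PathRel K m) a) =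
      RingQuot.mkAlgHom K (ExtRel K m q) (RingQuot.mkAlgHom K (PathRel K m) b) := by
  rw [RingQuot.mkAlgHom_rel K h]

lemma xe_mul_xe_ne {i j : ZMod m} (h : i ≠ j) :
    xe K m q i * xe K m q j = 0 := by
  have := xqd K m q (PathRel.orth i j h)
  rwa [map_mul, map_mul, map_zero, map_zero] at this

lemma xe_mul_xe (i : ZMod m) : xe K m q i * xe K m q i = xe K m q i := by
  have := xqd K m q (PathRel.idem i)
  rwa [map_mul, map_mul] at this

lemma sum_xe : (∑ i : ZMod m, xe K m q i) = 1 := by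
  have := xqd K m q (PathRel.total (K := K) (m := m))
  rwa [map_sum, map_sum, map_one, map_one] at this

lemma xe_mul_xa (i : ZMod m) : xe K m q i * xa K m q i = xa K m q i := by
  have := xqd K m q (PathRel.asrc i); rwa [map_mul, map_mul] at this

lemma xa_mul_xe (i : ZMod m) : xa K m q i * xe K m q (i + 1) = xa K m q i := by
  have := xqd K m q (PathRel.atgt i); rwa [map_mul, map_mul] at this

lemma xe_mul_xb (i : ZMod m) : xe K m q (i + 1) * xb K m q i = xb K m q i := by
  have := xqd K m q (PathRel.bsrc i); rwa [map_mul, map_mul] at this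

lemma xb_mul_xe (i : ZMod m) : xb K m q i * xe K m q i = xb K m q i := by
  have := xqd K m q (PathRel.btgt i); rwa [map_mul, map_mul] at this

-- gam / del lemmas
lemma gam_zero (i : ZMod m) : gam K m q i 0 = xe K m q i := rfl
lemma gam_succ (i : ZMod m) (s : ℕ) :
    gam K m q i (s + 1) = xa K m q i * gam K m q (i + 1) s := rfl
lemma del_zero (j : ZMod m) : del K m q j 0 = xe K m q j := rfl
lemma del_succ (j : ZMod m) (t : ℕ) :
    del K m q j (t + 1) = xb K m q (j + (t : ZMod m)) * del K m q j t := rfl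

lemma gam_one (i : ZMod m) : gam K m q i 1 = xa K m q i := by
  rw [gam_succ, gam_zero, xa_mul_xe]

lemma del_one (j : ZMod m) : del K m q j 1 = xb K m q j := by
  rw [del_succ, del_zero]
  norm_num
  rw [xb_mul_xe]

lemma gam_eq (i : ZMod m) (s : ℕ) :
    gam K m q i s * xe K m q (i + (s : ZMod m)) = gam K m q i s := by
  induction s generalizing i with
  | zero => rw [gam_zero]; norm_num; rw [xe_mul_xe]
  | succ s ih =>
      rw [gam_succ, mul_assoc]
      have hc : i + ((s + 1 : ℕ) : ZMod m) = (i + 1) + (s : ZMod m) := by push_cast; ring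
      rw [hc, ih]

lemma del_eq (j : ZMod m) (t : ℕ) :
    xe K m q (j + (t : ZMod m)) * del K m q j t = del K m q j t := by
  induction t with
  | zero => rw [del_zero]; norm_num; rw [xe_mul_xe]
  | succ t ih =>
      rw [del_succ, ← mul_assoc]
      have hc : j + ((t + 1 : ℕ) : ZMod m) = (j + (t : ZMod m)) + 1 := by push_cast; ring
      rw [hc, xe_mul_xb]

lemma mono_zero {i j : ZMod m} {s t : ℕ} (h : i + (s : ZMod m) ≠ j + (t : ZMod m)) :
    gam K m q i s * del K m q j t = 0 := by
  rw [← gam_eq, ← del_eq, mul_assoc, ← mul_assoc (xe K m q (i + (s : ZMod m))),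
    xe_mul_xe_ne K m q h, zero_mul, mul_zero]

lemma gamEval (i : ZMod m) (s : ℕ) (u : ZMod m) (a b : ℕ) (c : K) :
    Phi K m q (gam K m q i s) (Finsupp.single (u, a, b) c) =
      if u = i + (s : ZMod m) then Finsupp.single (i, s + a, b) c else 0 := by
  induction s generalizing i with
  | zero =>
      rw [gam_zero, Phi_xe, opE_single]
      norm_num
      split_ifs with h <;> simp [h]
  | succ s ih =>
      rw [gam_succ, map_mul, Module.End.mul_apply, ih (i + 1)]
      by_cases h : u = i + 1 + (s : ZMod m)
      · rw [if_pos h, Phi_xa, opA_single, if_pos rfl, if_pos (by rw [h]; push_cast; ring)]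
        have : s + a + 1 = s + 1 + a := by omega
        rw [this]
      · rw [if_neg h, map_zero, if_neg (fun hh => h (by rw [hh]; push_cast; ring))]

/-- coefficient `∏_{r<t} cc (j+r) a` -/
def ee (j : ZMod m) (t a : ℕ) : K := ∏ r ∈ Finset.range t, cc K m q (j + (r : ZMod m)) a

lemma ee_zero (j : ZMod m) (a : ℕ) : ee K m q j 0 a = 1 := by simp [ee]

lemma ee_apply_zero (j : ZMod m) (t : ℕ) : ee K m q j t 0 = 1 := by
  simp [ee, cc_zero]

lemma cc_one (k : ZMod m) : cc K m q k 1 = -(q (k + 1))⁻¹ := by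
  unfold cc
  rw [pow_one, Finset.prod_range_one]
  norm_num

lemma ee_one (j : ZMod m) (t : ℕ) : ee K m q j t 1 = cc K m q j t := by
  have h1 : ee K m q j t 1 = ∏ r ∈ Finset.range t, (-1 : K) * (q (j + 1 + (r : ZMod m)))⁻¹ := by
    refine Finset.prod_congr rfl fun r _ => ?_
    rw [cc_one]
    have h2 : j + (r : ZMod m) + 1 = j + 1 + (r : ZMod m) := by ring
    rw [h2]
    ring
  rw [h1, Finset.prod_mul_distrib, Finset.prod_const, Finset.prod_inv_distrib, cc,
    Finset.card_range]

lemma delEval (j : ZMod m) (t : ℕ) (u : ZMod m) (a b : ℕ) (c : K) :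
    Phi K m q (del K m q j t) (Finsupp.single (u, a, b) c) =
      if u = j then ee K m q j t a • Finsupp.single (j + (t : ZMod m), a, b + t) c else 0 := by
  induction t with
  | zero =>
      rw [del_zero, Phi_xe, opE_single, ee_zero]
      norm_num
      split_ifs with h <;> simp [h]
  | succ t ih =>
      rw [del_succ, map_mul, Module.End.mul_apply, ih]
      by_cases h : u = j
      · rw [if_pos h, if_pos h, map_smul, Phi_xb, opB_single, if_pos rfl,
          Finsupp.smul_single, Finsupp.smul_single]
        have h1 : j + ((t + 1 : ℕ) : ZMod m) = j + (t : ZMod m) + 1 := by push_cast; ring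
        have h2 : ee K m q j (t + 1) a = ee K m q j t a * cc K m q (j + (t : ZMod m)) a := by
          rw [ee, Finset.prod_range_succ]; rfl
        rw [h1, h2]
        congr 1
        rw [smul_eq_mul, smul_eq_mul]
        ring
      · rw [if_neg h, if_neg h, map_zero]

lemma monoEval (i j' : ZMod m) (s t : ℕ) (j : ZMod m) (a b : ℕ) (c : K) :
    Phi K m q (gam K m q i s * del K m q j' t) (Finsupp.single (j, a, b) c) =
      if j = j' then (if j' + (t : ZMod m) = i + (s : ZMod m)
        then ee K m q j' t a • Finsupp.single (i, s + a, b + t) c else 0) else 0 := by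
  rw [map_mul, Module.End.mul_apply, delEval]
  by_cases h : j = j'
  · rw [if_pos h, if_pos h, map_smul, gamEval]
    by_cases h2 : j' + (t : ZMod m) = i + (s : ZMod m)
    · rw [if_pos h2, if_pos h2]
    · rw [if_neg h2, if_neg h2, smul_zero]
  · rw [if_neg h, if_neg h, map_zero]

lemma homog_xe (k : ZMod m) : Homog K m q 0 (xe K m q k) :=
  Submodule.subset_span ⟨k, k, 0, 0, rfl, by rw [gam_zero, del_zero, xe_mul_xe]⟩

lemma homog_xa (k : ZMod m) : Homog K m q 1 (xa K m q k) :=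
  Submodule.subset_span ⟨k, k + 1, 1, 0, rfl, by rw [gam_one, del_zero, xa_mul_xe]⟩

lemma homog_xb (k : ZMod m) : Homog K m q 1 (xb K m q k) :=
  Submodule.subset_span ⟨k + 1, k, 0, 1, rfl, by rw [gam_zero, del_one, xe_mul_xb]⟩

lemma prod_cycle (f : ZMod m → K) (c : ZMod m) :
    ∏ l ∈ Finset.range m, f (c + (l : ZMod m)) = ∏ i : ZMod m, f i := by
  refine Finset.prod_nbij' (fun l => c + (l : ZMod m)) (fun i => (i - c).val)
    (fun a _ => Finset.mem_univ _) (fun b _ => Finset.mem_range.2 (ZMod.val_lt _))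
    (fun l hl => ?_) (fun b _ => ?_) (fun a _ => rfl)
  · show ((c + (l : ZMod m)) - c).val = l
    rw [add_sub_cancel_left, ZMod.val_natCast_of_lt (Finset.mem_range.1 hl)]
  · show c + (((b - c).val : ℕ) : ZMod m) = b
    rw [ZMod.natCast_rightInverse (b - c)]
    ring

lemma prod_shift (f : ZMod m → K) (c : ZMod m) :
    ∏ i : ZMod m, f (i + c) = ∏ i : ZMod m, f i :=
  Fintype.prod_equiv (Equiv.addRight c) _ _ (fun _ => rfl)

lemma prod_cc_cycle (s : ℕ) (k : ZMod m) :
    ∏ l ∈ Finset.range m, cc K m q (k + (l : ZMod m)) s =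
      (-1 : K) ^ (s * m) * ((∏ i : ZMod m, q i) ^ s)⁻¹ := by
  rw [prod_cycle K m (fun i => cc K m q i s) k]
  unfold cc
  rw [Finset.prod_mul_distrib, Finset.prod_const, Finset.card_univ, ZMod.card, ← pow_mul]
  congr 1
  rw [Finset.prod_inv_distrib]
  congr 1
  rw [Finset.prod_comm]
  have h1 : ∀ l ∈ Finset.range s, (∏ i : ZMod m, q (i + (1 + (l : ZMod m)))) =
      ∏ i : ZMod m, q i := fun l _ => prod_shift K m q (1 + (l : ZMod m))
  calc ∏ l ∈ Finset.range s, ∏ i : ZMod m, q (i + 1 + (l : ZMod m))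
      = ∏ l ∈ Finset.range s, ∏ i : ZMod m, q (i + (1 + (l : ZMod m))) := by
        refine Finset.prod_congr rfl fun l _ => Finset.prod_congr rfl fun i _ => ?_
        rw [add_assoc]
    _ = ∏ l ∈ Finset.range s, ∏ i : ZMod m, q i := Finset.prod_congr rfl h1
    _ = (∏ i : ZMod m, q i) ^ s := by rw [Finset.prod_const, Finset.card_range]

lemma cycle_iterate (C e : ZMod m → K) (h : ∀ k, C (k + 1) = e k * C k) (k : ZMod m)
    (r : ℕ) : C (k + (r : ZMod m)) = (∏ l ∈ Finset.range r, e (k + (l : ZMod m))) * C k := by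
  induction r with
  | zero => norm_num
  | succ r ih =>
      have hc : k + ((r + 1 : ℕ) : ZMod m) = (k + (r : ZMod m)) + 1 := by push_cast; ring
      rw [hc, h, ih, Finset.prod_range_succ]
      ring

def Rmap : MM K m →ₗ[K] ExtAlg K m q :=
  Finsupp.lsum K fun b => LinearMap.toSpanSingleton K _
    (gam K m q b.1 b.2.1 * del K m q (b.1 + (b.2.1 : ZMod m) - (b.2.2 : ZMod m)) b.2.2)

lemma Rmap_single (i : ZMod m) (s t : ℕ) (c : K) :
    Rmap K m q (Finsupp.single (i, s, t) c) =
      c • (gam K m q i s * del K m q (i + (s : ZMod m) - (t : ZMod m)) t) := by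
  rw [Rmap, Finsupp.lsum_single]
  rfl

section Props
variable {K m q} {n : ℕ} {z : ExtAlg K m q}

lemma prop_Tb (hz : Homog K m q n z) (j : ZMod m) :
    Phi K m q z (Finsupp.single (j, 0, 1) 1) =
      Tb K m (Phi K m q z (Finsupp.single (j, 0, 0) 1)) := by
  induction hz using Submodule.span_induction with
  | mem x hx =>
      obtain ⟨i, j', s, t, hst, rfl⟩ := hx
      rw [monoEval, monoEval]
      by_cases h1 : j = j'
      · rw [if_pos h1, if_pos h1]
        by_cases h2 : j' + (t : ZMod m) = i + (s : ZMod m)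
        · rw [if_pos h2, if_pos h2, ee_apply_zero, one_smul, one_smul, Tb_single]
          have h3 : 1 + t = 0 + t + 1 := by omega
          rw [h3]
        · rw [if_neg h2, if_neg h2, map_zero]
      · rw [if_neg h1, if_neg h1, map_zero]
  | zero => simp
  | add x y hx hy ihx ihy => rw [map_add, LinearMap.add_apply, LinearMap.add_apply,
      ihx, ihy, map_add]
  | smul a x hx ih => rw [map_smul, LinearMap.smul_apply, LinearMap.smul_apply, ih, map_smul]

lemma prop_Ta (hz : Homog K m q n z) (j : ZMod m) :
    Phi K m q z (Finsupp.single (j, 1, 0) 1) =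
      Ta K m q (Phi K m q z (Finsupp.single (j, 0, 0) 1)) := by
  induction hz using Submodule.span_induction with
  | mem x hx =>
      obtain ⟨i, j', s, t, hst, rfl⟩ := hx
      rw [monoEval, monoEval]
      by_cases h1 : j = j'
      · rw [if_pos h1, if_pos h1]
        by_cases h2 : j' + (t : ZMod m) = i + (s : ZMod m)
        · rw [if_pos h2, if_pos h2, ee_apply_zero, one_smul, Ta_single, ee_one]
          have h3 : i + ((s + 0 : ℕ) : ZMod m) - ((0 + t : ℕ) : ZMod m) = j' := by
            push_cast
            rw [sub_eq_iff_eq_add, add_zero, ← h2]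
            ring
          rw [h3, Finsupp.smul_single]
          norm_num
        · rw [if_neg h2, if_neg h2, map_zero]
      · rw [if_neg h1, if_neg h1, map_zero]
  | zero => simp
  | add x y hx hy ihx ihy => rw [map_add, LinearMap.add_apply, LinearMap.add_apply,
      ihx, ihy, map_add]
  | smul a x hx ih => rw [map_smul, LinearMap.smul_apply, LinearMap.smul_apply, ih, map_smul]

lemma prop_supp (hz : Homog K m q n z) (hn : n ≠ 0) (j : ZMod m) :
    Phi K m q z (Finsupp.single (j, 0, 0) 1) (j, 0, 0) = 0 := by
  induction hz using Submodule.span_induction with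
  | mem x hx =>
      obtain ⟨i, j', s, t, hst, rfl⟩ := hx
      rw [monoEval]
      by_cases h1 : j = j'
      · rw [if_pos h1]
        by_cases h2 : j' + (t : ZMod m) = i + (s : ZMod m)
        · rw [if_pos h2, Finsupp.smul_apply, Finsupp.single_apply, if_neg, smul_zero]
          intro hh
          apply hn
          have h6 := congrArg (fun p => p.2.1) hh
          have h7 := congrArg (fun p => p.2.2) hh
          simp only at h6 h7
          omega
        · rw [if_neg h2, Finsupp.coe_zero, Pi.zero_apply]
      · rw [if_neg h1, Finsupp.coe_zero, Pi.zero_apply]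
  | zero => simp
  | add x y hx hy ihx ihy => rw [map_add, LinearMap.add_apply, Finsupp.add_apply, ihx, ihy,
      add_zero]
  | smul a x hx ih => rw [map_smul, LinearMap.smul_apply, Finsupp.smul_apply, ih, smul_zero]

lemma prop_reconstruct (hz : Homog K m q n z) :
    z = Rmap K m q (∑ k : ZMod m, Phi K m q z (Finsupp.single (k, 0, 0) 1)) := by
  induction hz using Submodule.span_induction with
  | mem x hx =>
      obtain ⟨i, j', s, t, hst, rfl⟩ := hx
      have h4 : (∑ k : ZMod m,
          Phi K m q (gam K m q i s * del K m q j' t) (Finsupp.single (k, 0, 0) 1)) =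
          if j' + (t : ZMod m) = i + (s : ZMod m)
            then Finsupp.single (i, s, t) (1 : K) else 0 := by
        rw [Finset.sum_congr rfl (fun k _ => monoEval K m q i j' s t k 0 0 1)]
        rw [Finset.sum_ite_eq' Finset.univ j'
          (fun _ => if j' + (t : ZMod m) = i + (s : ZMod m)
            then ee K m q j' t 0 • Finsupp.single (i, s + 0, 0 + t) (1 : K) else 0)]
        rw [if_pos (Finset.mem_univ _)]
        by_cases h2 : j' + (t : ZMod m) = i + (s : ZMod m)
        · rw [if_pos h2, if_pos h2, ee_apply_zero, one_smul]
          norm_num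
        · rw [if_neg h2, if_neg h2]
      rw [h4]
      by_cases h2 : j' + (t : ZMod m) = i + (s : ZMod m)
      · rw [if_pos h2, Rmap_single, one_smul]
        have h3 : i + (s : ZMod m) - (t : ZMod m) = j' := by
          rw [sub_eq_iff_eq_add, ← h2]
        rw [h3]
      · rw [if_neg h2, map_zero]
        exact mono_zero K m q (fun hh => h2 hh.symm)
  | zero => simp
  | add x y hx hy ihx ihy =>
      conv_lhs => rw [ihx, ihy]
      rw [← map_add, ← Finset.sum_add_distrib]
      congr 1
      refine Finset.sum_congr rfl fun k _ => ?_
      rw [map_add, LinearMap.add_apply]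
  | smul a x hx ih =>
      conv_lhs => rw [ih]
      rw [← map_smul, Finset.smul_sum]
      congr 1
      refine Finset.sum_congr rfl fun k _ => ?_
      rw [map_smul, LinearMap.smul_apply]

end Props

end TrivAux
end

/-- If `ζ = q_0 ⋯ q_{m-1}` is not a root of unity, then the graded centre of
the Ext algebra of `Λ_q` is trivial: `Z_gr(E(Λ_q)) = K·1`, i.e. the bottom subalgebra
(the image of the structure map `K → E(Λ_q)`). -/
theorem graded_centre_trivial_of_not_root_of_unity
    (K : Type) [Field K] (m : ℕ) [NeZero m] (hm : 1 ≤ m)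
    (q : ZMod m → K) (hq : ∀ i, q i ≠ 0)
    (hζ : ∀ n : ℕ, 1 ≤ n → (∏ i : ZMod m, q i) ^ n ≠ 1) :
    ZGr K m q = ⊥ := by
  classical
  refine le_antisymm ?_ bot_le
  rw [ZGr]
  apply Algebra.adjoin_le
  rintro z ⟨n, hzn, hcomm⟩
  rw [SetLike.mem_coe, Algebra.mem_bot]
  set ζ := ∏ i : ZMod m, q i with hζdef
  have hζ0 : ζ ≠ 0 := Finset.prod_ne_zero_iff.2 fun i _ => hq i
  set F : ZMod m → TrivAux.MM K m :=
    fun k => TrivAux.Phi K m q z (Finsupp.single (k, 0, 0) 1) with hF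
  set C : ZMod m → ℕ → ℕ → K := fun k s t => F k (k, s, t) with hC
  -- the two fundamental recurrences
  have hstar : ∀ (k : ZMod m) (s t : ℕ),
      C (k + 1) s t = (-1 : K) ^ n * (TrivAux.cc K m q k s * C k s t) := by
    intro k s t
    have h := hcomm 1 (xb K m q k) (TrivAux.homog_xb K m q k)
    rw [mul_one] at h
    have h2 := congrArg (TrivAux.Phi K m q) h
    rw [map_mul, map_smul, map_mul, TrivAux.Phi_xb] at h2
    have h3 := DFunLike.congr_fun h2 (Finsupp.single (k, 0, 0) (1 : K))
    rw [Module.End.mul_apply, LinearMap.smul_apply, Module.End.mul_apply,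
      TrivAux.opB_single, if_pos rfl, TrivAux.cc_zero, one_mul,
      TrivAux.prop_Tb hzn (k + 1)] at h3
    have h4 := congrArg (fun x : TrivAux.MM K m => x (k + 1, s, t + 1)) h3
    try simp only at h4
    rw [TrivAux.Tb_apply, Finsupp.smul_apply, TrivAux.opB_apply, smul_eq_mul] at h4
    exact h4
  have hstar2 : ∀ (k : ZMod m) (s t : ℕ),
      TrivAux.cc K m q (k + (s : ZMod m) - (t : ZMod m)) t * C k s t =
        (-1 : K) ^ n * C (k + 1) s t := by
    intro k s t
    have h := hcomm 1 (xa K m q k) (TrivAux.homog_xa K m q k)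
    rw [mul_one] at h
    have h2 := congrArg (TrivAux.Phi K m q) h
    rw [map_mul, map_smul, map_mul, TrivAux.Phi_xa] at h2
    have h3 := DFunLike.congr_fun h2 (Finsupp.single (k + 1, 0, 0) (1 : K))
    rw [Module.End.mul_apply, LinearMap.smul_apply, Module.End.mul_apply,
      TrivAux.opA_single, if_pos rfl, TrivAux.prop_Ta hzn k] at h3
    have h4 := congrArg (fun x : TrivAux.MM K m => x (k, s + 1, t)) h3
    try simp only at h4
    rw [TrivAux.Ta_apply, Finsupp.smul_apply, TrivAux.opA_apply, smul_eq_mul] at h4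
    exact h4
  have hsq : ∀ j : ℕ, (-1 : K) ^ j * (-1 : K) ^ j = 1 := fun j => by
    rw [← pow_add]
    exact Even.neg_one_pow ⟨j, rfl⟩
  -- vanishing of higher coefficients
  have hsq2 : ∀ a b : ℕ, (((-1 : K) ^ a) ^ m * (-1 : K) ^ (b * m)) *
      (((-1 : K) ^ a) ^ m * (-1 : K) ^ (b * m)) = 1 := by
    intro a b
    calc (((-1 : K) ^ a) ^ m * (-1 : K) ^ (b * m)) *
          (((-1 : K) ^ a) ^ m * (-1 : K) ^ (b * m))
        = ((-1 : K) ^ a * (-1 : K) ^ a) ^ m *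
            ((-1 : K) ^ (b * m) * (-1 : K) ^ (b * m)) := by rw [mul_pow]; ring
      _ = 1 := by rw [hsq a, hsq (b * m), one_pow, one_mul]
  have hkill : ∀ (k : ZMod m) (s t : ℕ), s ≠ 0 ∨ t ≠ 0 → C k s t = 0 := by
    intro k s t hst
    by_contra hCne
    rcases hst with hs | ht
    · have hrec : ∀ k' : ZMod m, (fun k'' => C k'' s t) (k' + 1) =
          (fun k'' => (-1 : K) ^ n * TrivAux.cc K m q k'' s) k' *
            (fun k'' => C k'' s t) k' := by
        intro k'
        simp only
        rw [hstar k' s t]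
        ring
      have hit := TrivAux.cycle_iterate K m (fun k'' => C k'' s t)
        (fun k'' => (-1 : K) ^ n * TrivAux.cc K m q k'' s) hrec k m
      rw [ZMod.natCast_self, add_zero] at hit
      have hp : (∏ l ∈ Finset.range m,
          (-1 : K) ^ n * TrivAux.cc K m q (k + (l : ZMod m)) s) =
          ((-1 : K) ^ n) ^ m * ((-1 : K) ^ (s * m) * (ζ ^ s)⁻¹) := by
        rw [Finset.prod_mul_distrib, Finset.prod_const, Finset.card_range,
          TrivAux.prod_cc_cycle]
      rw [hp] at hit
      have h1 : ((-1 : K) ^ n) ^ m * ((-1 : K) ^ (s * m) * (ζ ^ s)⁻¹) = 1 :=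
        mul_right_cancel₀ hCne (by rw [one_mul]; exact hit.symm)
      have h2 : ζ ^ s = ((-1 : K) ^ n) ^ m * (-1 : K) ^ (s * m) := by
        have h2' := congrArg (fun x => x * ζ ^ s) h1
        simp only [one_mul] at h2'
        rw [mul_assoc, mul_assoc, inv_mul_cancel₀ (pow_ne_zero _ hζ0), mul_one] at h2'
        exact h2'.symm
      have h3 : ζ ^ (s + s) = 1 := by
        rw [pow_add, h2]
        exact hsq2 n s
      exact hζ (s + s) (by omega) h3
    · have hrec : ∀ k' : ZMod m, (fun k'' => C k'' s t) (k' + 1) =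
          (fun k'' => (-1 : K) ^ n *
            TrivAux.cc K m q (k'' + (s : ZMod m) - (t : ZMod m)) t) k' *
            (fun k'' => C k'' s t) k' := by
        intro k'
        simp only
        have h5 : (-1 : K) ^ n * (TrivAux.cc K m q (k' + (s : ZMod m) - (t : ZMod m)) t *
            C k' s t) = C (k' + 1) s t := by
          rw [hstar2 k' s t, ← mul_assoc, hsq n, one_mul]
        rw [← h5]
        ring
      have hit := TrivAux.cycle_iterate K m (fun k'' => C k'' s t)
        (fun k'' => (-1 : K) ^ n *
          TrivAux.cc K m q (k'' + (s : ZMod m) - (t : ZMod m)) t) hrec k m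
      rw [ZMod.natCast_self, add_zero] at hit
      have hp : (∏ l ∈ Finset.range m, (-1 : K) ^ n *
          TrivAux.cc K m q (k + (l : ZMod m) + (s : ZMod m) - (t : ZMod m)) t) =
          ((-1 : K) ^ n) ^ m * ((-1 : K) ^ (t * m) * (ζ ^ t)⁻¹) := by
        rw [Finset.prod_mul_distrib, Finset.prod_const, Finset.card_range]
        congr 1
        rw [← TrivAux.prod_cc_cycle K m q t (k + (s : ZMod m) - (t : ZMod m))]
        refine Finset.prod_congr rfl fun l _ => ?_
        congr 1
        ring
      rw [hp] at hit
      have h1 : ((-1 : K) ^ n) ^ m * ((-1 : K) ^ (t * m) * (ζ ^ t)⁻¹) = 1 :=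
        mul_right_cancel₀ hCne (by rw [one_mul]; exact hit.symm)
      have h2 : ζ ^ t = ((-1 : K) ^ n) ^ m * (-1 : K) ^ (t * m) := by
        have h2' := congrArg (fun x => x * ζ ^ t) h1
        simp only [one_mul] at h2'
        rw [mul_assoc, mul_assoc, inv_mul_cancel₀ (pow_ne_zero _ hζ0), mul_one] at h2'
        exact h2'.symm
      have h3 : ζ ^ (t + t) = 1 := by
        rw [pow_add, h2]
        exact hsq2 n t
      exact hζ (t + t) (by omega) h3
  -- support of F k
  have hE : ∀ k : ZMod m, F k = TrivAux.opE K m k (F k) := by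
    intro k
    have h := hcomm 0 (xe K m q k) (TrivAux.homog_xe K m q k)
    rw [mul_zero, pow_zero, one_smul] at h
    have h2 := congrArg (TrivAux.Phi K m q) h
    rw [map_mul, map_mul, TrivAux.Phi_xe] at h2
    have h3 := DFunLike.congr_fun h2 (Finsupp.single (k, 0, 0) (1 : K))
    rw [Module.End.mul_apply, Module.End.mul_apply, TrivAux.opE_single, if_pos rfl] at h3
    exact h3
  have hFk : ∀ k : ZMod m, F k = C k 0 0 • Finsupp.single (k, 0, 0) (1 : K) := by
    intro k
    ext b
    obtain ⟨i, s, t⟩ := b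
    rw [Finsupp.smul_apply, Finsupp.single_apply]
    by_cases h1 : i = k
    · subst h1
      by_cases h2 : s = 0 ∧ t = 0
      · obtain ⟨rfl, rfl⟩ := h2
        rw [if_pos rfl, smul_eq_mul, mul_one]
      · rw [if_neg (fun hh : ((i : ZMod m), (0:ℕ), (0:ℕ)) = (i, s, t) => by
          rw [Prod.ext_iff, Prod.ext_iff] at hh
          exact h2 ⟨hh.2.1.symm, hh.2.2.symm⟩), smul_zero]
        have : s ≠ 0 ∨ t ≠ 0 := by tauto
        exact hkill i s t this
    · rw [if_neg (fun hh : ((k : ZMod m), (0:ℕ), (0:ℕ)) = (i, s, t) => h1 (by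
        rw [Prod.ext_iff] at hh
        exact hh.1.symm)), smul_zero]
      have h4 := congrArg (fun x : TrivAux.MM K m => x (i, s, t)) (hE k)
      try simp only at h4
      rw [TrivAux.opE_apply, if_neg h1] at h4
      exact h4
  have hrecz := TrivAux.prop_reconstruct hzn
  by_cases hn : n = 0
  · -- constant coefficients
    have hconst : ∀ k : ZMod m, C k 0 0 = C 0 0 0 := by
      have hstep : ∀ k : ZMod m, C (k + 1) 0 0 = C k 0 0 := by
        intro k
        rw [hstar k 0 0, hn, pow_zero, TrivAux.cc_zero, one_mul, one_mul]
      have hnat : ∀ r : ℕ, C ((r : ZMod m)) 0 0 = C 0 0 0 := by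
        intro r
        induction r with
        | zero => norm_num
        | succ r ih =>
            have : ((r + 1 : ℕ) : ZMod m) = ((r : ℕ) : ZMod m) + 1 := by push_cast; ring
            rw [this, hstep, ih]
      intro k
      have : ((k.val : ℕ) : ZMod m) = k := ZMod.natCast_rightInverse k
      rw [← this, hnat]
    refine ⟨C 0 0 0, ?_⟩
    have hxe : ∀ k : ZMod m, TrivAux.Rmap K m q (Finsupp.single (k, 0, 0) (1 : K)) =
        xe K m q k := by
      intro k
      rw [TrivAux.Rmap_single, one_smul]
      norm_num
      rw [TrivAux.gam_zero, TrivAux.del_zero, TrivAux.xe_mul_xe]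
    rw [hrecz]
    calc algebraMap K (ExtAlg K m q) (C 0 0 0) = C 0 0 0 • (1 : ExtAlg K m q) := by
          rw [Algebra.algebraMap_eq_smul_one]
      _ = C 0 0 0 • ∑ k : ZMod m, xe K m q k := by rw [TrivAux.sum_xe]
      _ = ∑ k : ZMod m, C 0 0 0 • xe K m q k := Finset.smul_sum
      _ = TrivAux.Rmap K m q (∑ k : ZMod m, F k) := by
          rw [map_sum]
          refine Finset.sum_congr rfl fun k _ => ?_
          rw [hFk k, hconst k, map_smul, hxe k]
      _ = TrivAux.Rmap K m q
            (∑ k : ZMod m, TrivAux.Phi K m q z (Finsupp.single (k, 0, 0) 1)) := rfl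
  · -- n ≠ 0 : everything vanishes
    refine ⟨0, ?_⟩
    rw [map_zero, hrecz]
    have hzero : ∀ k : ZMod m, TrivAux.Phi K m q z (Finsupp.single (k, 0, 0) 1) = 0 := by
      intro k
      have h0 : C k 0 0 = 0 := TrivAux.prop_supp hzn hn k
      have := hFk k
      rw [h0, zero_smul] at this
      exact this
    rw [Finset.sum_congr rfl fun k _ => hzero k, Finset.sum_const_zero, map_zero]
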